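/- Let K be a field, n ≥ 1, and let X ∈ M_n(K) be a regular nilpotent matrix, i.e. Xⁿ = 0 and X^{n−1} ≠ 0. Let C = {g ∈ GL_n(K) : gX = Xg} and let N = {g ∈ GL_n(K) : gCg⁻¹ = C} be the normalizer of C in GL_n(K). Then the conjugation orbit of X under N equals the set of regular nilpotent elements of the span of X, X², …, X^{n−1}; that is, {gXg⁻¹ : g ∈ N} = {c₁X + c₂X² + ⋯ + c_{n−1}X^{n−1} : c_i ∈ K, c₁ ≠ 0}. -/

import Mathlib

open Matrix

/-- The centralizer `C = {g ∈ GLₙ(K) : gX = Xg}` of a matrix `X ∈ Mₙ(K)`,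
as a subgroup of the group `GLₙ(K) = (Mₙ(K))ˣ` of invertible matrices. -/
def matrixCentralizer {K : Type*} [Field K] {n : ℕ} (X : Matrix (Fin n) (Fin n) K) :
    Subgroup (Matrix (Fin n) (Fin n) K)ˣ where
  carrier := {g | (g : Matrix (Fin n) (Fin n) K) * X = X * (g : Matrix (Fin n) (Fin n) K)}
  one_mem' := by simp
  mul_mem' := by
    intro a b ha hb
    simp only [Set.mem_setOf_eq, Units.val_mul] at *
    rw [mul_assoc, hb, ← mul_assoc, ha, mul_assoc]
  inv_mem' := by
    intro a ha
    simp only [Set.mem_setOf_eq] at *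
    calc (↑a⁻¹ : Matrix (Fin n) (Fin n) K) * X
        = ↑a⁻¹ * (X * ↑a) * ↑a⁻¹ := by
          rw [mul_assoc, mul_assoc, Units.mul_inv, mul_one]
      _ = ↑a⁻¹ * (↑a * X) * ↑a⁻¹ := by rw [ha]
      _ = X * ↑a⁻¹ := by rw [← mul_assoc, Units.inv_mul, one_mul]


section Helpers
variable {K : Type*} [Field K] {n : ℕ}



lemma pow_ge (X : Matrix (Fin n) (Fin n) K) (hXn : X ^ n = 0) {m : ℕ} (h : n ≤ m) :
    X ^ m = 0 := by
  obtain ⟨k, rfl⟩ := Nat.exists_eq_add_of_le h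
  rw [pow_add, hXn, zero_mul]

lemma exists_vec (M : Matrix (Fin n) (Fin n) K) (hM : M ≠ 0) :
    ∃ v : Fin n → K, M *ᵥ v ≠ 0 := by
  by_contra h
  push_neg at h
  apply hM
  ext i j
  have := congrFun (h (Pi.single j 1)) i
  simpa [Matrix.mulVec_single] using this

lemma li_pows (X : Matrix (Fin n) (Fin n) K) (v : Fin n → K) (hXn : X ^ n = 0)
    (hv : X ^ (n - 1) *ᵥ v ≠ 0) :
    LinearIndependent K (fun i : Fin n => X ^ (i : ℕ) *ᵥ v) := by
  rw [Fintype.linearIndependent_iff]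
  intro g hg
  by_contra hne
  push_neg at hne
  obtain ⟨i₀, hi₀⟩ := hne
  classical
  set S : Finset (Fin n) := Finset.univ.filter (fun i => g i ≠ 0) with hSdef
  have hS : S.Nonempty := ⟨i₀, by simp [hSdef, hi₀]⟩
  set k := S.min' hS with hkdef
  have hk : g k ≠ 0 := by
    have := S.min'_mem hS
    simp [hSdef] at this
    exact this
  have hkn : (k : ℕ) ≤ n - 1 := Nat.le_sub_one_of_lt k.isLt
  have h2 : ∑ i : Fin n, g i • (X ^ (n - 1 - (k : ℕ) + (i : ℕ)) *ᵥ v) = 0 := by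
    have := congrArg (fun w => X ^ (n - 1 - (k : ℕ)) *ᵥ w) hg
    simp only [Matrix.mulVec_zero] at this
    rw [← this]
    rw [← Matrix.mulVecLin_apply, map_sum]
    apply Finset.sum_congr rfl
    intro i _
    rw [_root_.map_smul, Matrix.mulVecLin_apply, Matrix.mulVec_mulVec, ← pow_add]
  rw [Finset.sum_eq_single k] at h2
  · rw [Nat.sub_add_cancel hkn] at h2
    rcases smul_eq_zero.mp h2 with h | h
    · exact hk h
    · exact hv h
  · intro i _ hik
    by_cases hgi : g i = 0
    · simp [hgi]
    · have hiS : i ∈ S := by simp [hSdef, hgi]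
      have : k ≤ i := S.min'_le i hiS
      have hlt : (k : ℕ) < (i : ℕ) := lt_of_le_of_ne (Fin.le_iff_val_le_val.mp this)
        (fun h => hik (Fin.ext h.symm))
      have : n ≤ n - 1 - (k : ℕ) + (i : ℕ) := by omega
      rw [pow_ge X hXn this]
      simp
  · intro h; exact absurd (Finset.mem_univ k) h



lemma eq_of_mulVec_basis {ι : Type*} [Fintype ι] (b : Module.Basis ι K (Fin n → K))
    (A B : Matrix (Fin n) (Fin n) K) (h : ∀ i, A *ᵥ b i = B *ᵥ b i) : A = B := by
  apply Matrix.toLin'.injective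
  apply b.ext
  intro i
  simpa [Matrix.toLin'_apply] using h i

noncomputable def regBasis (hn : 0 < n) (X : Matrix (Fin n) (Fin n) K) (v : Fin n → K)
    (hXn : X ^ n = 0) (hv : X ^ (n - 1) *ᵥ v ≠ 0) : Module.Basis (Fin n) K (Fin n → K) :=
  haveI : Nonempty (Fin n) := ⟨⟨0, hn⟩⟩
  basisOfLinearIndependentOfCardEqFinrank (li_pows X v hXn hv) (by simp)

lemma regBasis_apply (hn : 0 < n) (X : Matrix (Fin n) (Fin n) K) (v : Fin n → K)
    (hXn : X ^ n = 0) (hv : X ^ (n - 1) *ᵥ v ≠ 0) (i : Fin n) :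
    regBasis hn X v hXn hv i = X ^ (i : ℕ) *ᵥ v := by
  haveI : Nonempty (Fin n) := ⟨⟨0, hn⟩⟩
  simp [regBasis, coe_basisOfLinearIndependentOfCardEqFinrank]

lemma sum_mulVec {ι : Type*} (s : Finset ι) (A : ι → Matrix (Fin n) (Fin n) K)
    (v : Fin n → K) : (∑ i ∈ s, A i) *ᵥ v = ∑ i ∈ s, A i *ᵥ v := by
  classical
  induction s using Finset.cons_induction with
  | empty => simp
  | cons a s ha ih => rw [Finset.sum_cons, Finset.sum_cons, Matrix.add_mulVec, ih]

lemma comm_sum (X M : Matrix (Fin n) (Fin n) K) (hM : M * X = X * M)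
    {ι : Type*} (s : Finset ι) (c : ι → K) (e : ι → ℕ) :
    M * (∑ i ∈ s, c i • X ^ e i) = (∑ i ∈ s, c i • X ^ e i) * M := by
  rw [Finset.mul_sum, Finset.sum_mul]
  refine Finset.sum_congr rfl fun i _ => ?_
  rw [mul_smul_comm, smul_mul_assoc, (Commute.pow_right hM (e i)).eq]

lemma mem_span (hn : 0 < n) (X M : Matrix (Fin n) (Fin n) K) (v : Fin n → K)
    (hXn : X ^ n = 0) (hv : X ^ (n - 1) *ᵥ v ≠ 0) (hM : M * X = X * M) :
    ∃ a : Fin n → K, M = ∑ i : Fin n, a i • X ^ (i : ℕ) := by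
  set b := regBasis hn X v hXn hv with hb
  set a : Fin n → K := fun i => b.repr (M *ᵥ v) i with ha
  refine ⟨a, ?_⟩
  have hMv : M *ᵥ v = ∑ i : Fin n, a i • (X ^ (i : ℕ) *ᵥ v) := by
    conv_lhs => rw [← b.sum_repr (M *ᵥ v)]
    refine Finset.sum_congr rfl fun i _ => ?_
    rw [regBasis_apply]
  apply eq_of_mulVec_basis b
  intro j
  rw [regBasis_apply]
  have hcomm : M * X ^ (j : ℕ) = X ^ (j : ℕ) * M := (Commute.pow_right hM (j : ℕ)).eq
  rw [Matrix.mulVec_mulVec, Matrix.mulVec_mulVec, hcomm, ← Matrix.mulVec_mulVec, hMv]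
  have hR : (∑ i : Fin n, a i • X ^ (i : ℕ)) * X ^ (j : ℕ)
      = ∑ i : Fin n, a i • X ^ ((i : ℕ) + (j : ℕ)) := by
    rw [Finset.sum_mul]
    exact Finset.sum_congr rfl fun i _ => by rw [smul_mul_assoc, ← pow_add]
  rw [hR, _root_.sum_mulVec, ← Matrix.mulVecLin_apply, map_sum]
  refine Finset.sum_congr rfl fun i _ => ?_
  rw [_root_.map_smul, Matrix.mulVecLin_apply, Matrix.mulVec_mulVec, ← pow_add,
    Matrix.smul_mulVec, add_comm]

lemma nilp_sum (X : Matrix (Fin n) (Fin n) K) (hXn : X ^ n = 0) (c : ℕ → K) (m : ℕ) :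
    (∑ i ∈ Finset.Icc 1 m, c i • X ^ i) ^ n = 0 := by
  have hfac : (∑ i ∈ Finset.Icc 1 m, c i • X ^ i)
      = X * (∑ i ∈ Finset.Icc 1 m, c i • X ^ (i - 1)) := by
    rw [Finset.mul_sum]
    refine Finset.sum_congr rfl fun i hi => ?_
    have h1 : 1 ≤ i := (Finset.mem_Icc.mp hi).1
    rw [mul_smul_comm, ← pow_succ', Nat.sub_add_cancel h1]
  have hcS : Commute X (∑ i ∈ Finset.Icc 1 m, c i • X ^ (i - 1)) :=
    comm_sum X X rfl _ _ _
  rw [hfac, hcS.mul_pow, hXn, zero_mul]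

lemma pow_pred_eq (hn2 : 2 ≤ n) (X R : Matrix (Fin n) (Fin n) K) (hXn : X ^ n = 0)
    (hR : X * R = R * X) (c : K) :
    (c • X + X ^ 2 * R) ^ (n - 1) = c ^ (n - 1) • X ^ (n - 1) := by
  have hXcomm : Commute X (X ^ 2 * R) := ((Commute.refl X).pow_right 2).mul_right hR
  have hcomm : Commute (c • X) (X ^ 2 * R) := hXcomm.smul_left c
  rw [hcomm.add_pow]
  rw [Finset.sum_eq_single (n - 1)]
  · simp [smul_pow]
  · intro k hk hkne
    have hk' : k < n - 1 := by
      have := Finset.mem_range.mp hk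
      omega
    have hXR : (X ^ 2 * R) ^ (n - 1 - k) = X ^ (2 * (n - 1 - k)) * R ^ (n - 1 - k) := by
      have hR2 : Commute (X ^ 2) R := Commute.pow_left hR 2
      rw [hR2.mul_pow, ← pow_mul]
    rw [hXR, smul_pow]
    have hz : X ^ k * (X ^ (2 * (n - 1 - k)) * R ^ (n - 1 - k)) = 0 := by
      rw [← mul_assoc, ← pow_add, pow_ge X hXn (by omega), zero_mul]
    rw [smul_mul_assoc, hz, smul_zero, zero_mul]
  · intro h
    exact absurd (Finset.mem_range.mpr (by omega)) h

lemma exists_unit_conj (hn : 0 < n) (X Y : Matrix (Fin n) (Fin n) K) (v : Fin n → K)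
    (hXn : X ^ n = 0) (hvX : X ^ (n - 1) *ᵥ v ≠ 0)
    (hYn : Y ^ n = 0) (hvY : Y ^ (n - 1) *ᵥ v ≠ 0) :
    ∃ g : (Matrix (Fin n) (Fin n) K)ˣ, (↑g : Matrix (Fin n) (Fin n) K) * X = Y * (↑g : Matrix (Fin n) (Fin n) K) := by
  classical
  set bX := regBasis hn X v hXn hvX with hbX
  set bY := regBasis hn Y v hYn hvY with hbY
  set e := bX.equiv bY (Equiv.refl _) with he
  set G := LinearMap.toMatrix' (e : (Fin n → K) →ₗ[K] (Fin n → K)) with hG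
  set G' := LinearMap.toMatrix' (e.symm : (Fin n → K) →ₗ[K] (Fin n → K)) with hG'
  have hGG' : G * G' = 1 := by
    rw [hG, hG', ← LinearMap.toMatrix'_comp]
    have : (e : (Fin n → K) →ₗ[K] (Fin n → K)) ∘ₗ (e.symm : (Fin n → K) →ₗ[K] (Fin n → K))
        = LinearMap.id := by
      ext w
      simp
    rw [this, LinearMap.toMatrix'_id]
  have hG'G : G' * G = 1 := by
    rw [hG, hG', ← LinearMap.toMatrix'_comp]
    have : (e.symm : (Fin n → K) →ₗ[K] (Fin n → K)) ∘ₗ (e : (Fin n → K) →ₗ[K] (Fin n → K))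
        = LinearMap.id := by
      ext w
      simp
    rw [this, LinearMap.toMatrix'_id]
  have hGv : ∀ w, G *ᵥ w = e w := by
    intro w
    have h1 := Matrix.toLin'_toMatrix' (R := K) (e : (Fin n → K) →ₗ[K] (Fin n → K))
    calc G *ᵥ w = Matrix.toLin' G w := (Matrix.toLin'_apply G w).symm
      _ = (e : (Fin n → K) →ₗ[K] (Fin n → K)) w := by rw [hG]; rw [h1]
      _ = e w := rfl
  refine ⟨⟨G, G', hGG', hG'G⟩, ?_⟩
  show G * X = Y * G
  apply eq_of_mulVec_basis bX
  intro i
  have hbXi : bX i = X ^ (i : ℕ) *ᵥ v := regBasis_apply hn X v hXn hvX i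
  have hbYi : e (bX i) = Y ^ (i : ℕ) *ᵥ v := by
    rw [he, Module.Basis.equiv_apply]
    exact regBasis_apply hn Y v hYn hvY i
  have key : e (X *ᵥ (X ^ (i : ℕ) *ᵥ v)) = Y *ᵥ (Y ^ (i : ℕ) *ᵥ v) := by
    rw [Matrix.mulVec_mulVec, Matrix.mulVec_mulVec, ← pow_succ', ← pow_succ']
    by_cases hi : (i : ℕ) + 1 < n
    · have h2 : X ^ ((i : ℕ) + 1) *ᵥ v = bX ⟨(i : ℕ) + 1, hi⟩ :=
        (regBasis_apply hn X v hXn hvX ⟨(i : ℕ) + 1, hi⟩).symm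
      rw [h2, he, Module.Basis.equiv_apply]
      exact regBasis_apply hn Y v hYn hvY ⟨(i : ℕ) + 1, hi⟩
    · have hin : (i : ℕ) + 1 = n := by have := i.isLt; omega
      rw [hin, hXn, hYn]
      simp
  calc (G * X) *ᵥ bX i = G *ᵥ (X *ᵥ bX i) := by rw [Matrix.mulVec_mulVec]
    _ = e (X *ᵥ (X ^ (i : ℕ) *ᵥ v)) := by rw [hGv, hbXi]
    _ = Y *ᵥ (Y ^ (i : ℕ) *ᵥ v) := key
    _ = Y *ᵥ e (bX i) := by rw [hbYi]
    _ = Y *ᵥ (G *ᵥ bX i) := by rw [hGv]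
    _ = (Y * G) *ᵥ bX i := by rw [Matrix.mulVec_mulVec]

lemma decomp (hn2 : 2 ≤ n) (X : Matrix (Fin n) (Fin n) K) (c : ℕ → K) :
    ∑ i ∈ Finset.Icc 1 (n - 1), c i • X ^ i
      = c 1 • X + X ^ 2 * (∑ i ∈ Finset.Icc 2 (n - 1), c i • X ^ (i - 2)) := by
  have h1 : Finset.Icc 1 (n - 1) = insert 1 (Finset.Icc 2 (n - 1)) := by
    ext x; simp only [Finset.mem_Icc, Finset.mem_insert]; omega
  have h1not : (1 : ℕ) ∉ Finset.Icc 2 (n - 1) := by simp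
  rw [h1, Finset.sum_insert h1not, pow_one, Finset.mul_sum]
  congr 1
  refine Finset.sum_congr rfl fun i hi => ?_
  have h2 : 2 ≤ i := (Finset.mem_Icc.mp hi).1
  rw [mul_smul_comm, ← pow_add, Nat.add_sub_cancel' h2]

lemma sum_pow_pred (hn2 : 2 ≤ n) (X : Matrix (Fin n) (Fin n) K) (hXn : X ^ n = 0) (c : ℕ → K) :
    (∑ i ∈ Finset.Icc 1 (n - 1), c i • X ^ i) ^ (n - 1) = c 1 ^ (n - 1) • X ^ (n - 1) := by
  rw [decomp hn2 X c]
  exact pow_pred_eq hn2 X _ hXn (comm_sum X X rfl _ _ _) (c 1)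

lemma conj_mul_conj (G G' A B : Matrix (Fin n) (Fin n) K) (hG'G : G' * G = 1) :
    (G * A * G') * (G * B * G') = G * (A * B) * G' := by
  calc (G * A * G') * (G * B * G') = G * A * (G' * G * (B * G')) := by
        simp only [mul_assoc]
    _ = G * A * (B * G') := by rw [hG'G, one_mul]
    _ = G * (A * B) * G' := by simp only [mul_assoc]

lemma conj_cancel (G G' A B : Matrix (Fin n) (Fin n) K) (hGG' : G * G' = 1)
    (hG'G : G' * G = 1) : G * A * G' = G * B * G' ↔ A = B := by
  constructor
  · intro h
    have h2 := congrArg (fun M => G' * M * G) h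
    simp only [mul_assoc] at h2
    rw [hG'G, mul_one, mul_one] at h2
    calc A = G' * G * A := by rw [hG'G, one_mul]
      _ = G' * G * B := by rw [mul_assoc, h2, ← mul_assoc]
      _ = B := by rw [hG'G, one_mul]
  · intro h; rw [h]

lemma mem_matrixCentralizer_iff (X : Matrix (Fin n) (Fin n) K)
    (h : (Matrix (Fin n) (Fin n) K)ˣ) :
    h ∈ matrixCentralizer X ↔
      (↑h : Matrix (Fin n) (Fin n) K) * X = X * (↑h : Matrix (Fin n) (Fin n) K) := Iff.rfl


end Helpers

/-- **The orbit of a regular nilpotent matrix under the normalizer of its centralizer.**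
Let `X ∈ Mₙ(K)` be regular nilpotent (`Xⁿ = 0`, `X^(n-1) ≠ 0`), let
`C = {g ∈ GLₙ(K) : gX = Xg}` and let `N` be the normalizer of `C` in `GLₙ(K)`.
Then the conjugation orbit `{gXg⁻¹ : g ∈ N}` equals the set of regular nilpotent
elements of the span of `X, X², …, X^(n-1)`, i.e.
`{c₁X + c₂X² + ⋯ + c_{n-1}X^(n-1) : cᵢ ∈ K, c₁ ≠ 0}`. -/
theorem stmt_6 {K : Type*} [Field K] (n : ℕ) (hn : 1 ≤ n)
    (X : Matrix (Fin n) (Fin n) K) (hXn : X ^ n = 0) (hXreg : X ^ (n - 1) ≠ 0) :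
    {Y : Matrix (Fin n) (Fin n) K | ∃ g ∈ Subgroup.normalizer (matrixCentralizer X : Set (Matrix (Fin n) (Fin n) K)ˣ),
        Y = (g : Matrix (Fin n) (Fin n) K) * X * ((g⁻¹ : (Matrix (Fin n) (Fin n) K)ˣ) :
          Matrix (Fin n) (Fin n) K)} =
      {Y : Matrix (Fin n) (Fin n) K | ∃ c : ℕ → K, c 1 ≠ 0 ∧
        Y = ∑ i ∈ Finset.Icc 1 (n - 1), c i • X ^ i} := by
  classical
  ext Y
  simp only [Set.mem_setOf_eq]
  rcases Nat.lt_or_ge n 2 with hn1 | hn2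
  · -- n = 1
    have hn' : n = 1 := by omega
    subst hn'
    have hX0 : X = 0 := by simpa using hXn
    constructor
    · rintro ⟨g, hg, rfl⟩
      exact ⟨fun _ => 1, one_ne_zero, by simp [hX0]⟩
    · rintro ⟨c, hc, rfl⟩
      exact ⟨1, Subgroup.one_mem _, by simp [hX0]⟩
  · have hn0 : 0 < n := by omega
    obtain ⟨v, hv⟩ := exists_vec _ hXreg
    constructor
    · -- forward direction
      rintro ⟨g, hg, rfl⟩
      set G : Matrix (Fin n) (Fin n) K := ↑g with hGdef
      set G' : Matrix (Fin n) (Fin n) K := ↑g⁻¹ with hG'def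
      have hGG' : G * G' = 1 := by
        rw [hGdef, hG'def, ← Units.val_mul, mul_inv_cancel, Units.val_one]
      have hG'G : G' * G = 1 := by
        rw [hGdef, hG'def, ← Units.val_mul, inv_mul_cancel, Units.val_one]
      set Z := G * X * G' with hZdef
      have hpow : ∀ k : ℕ, Z ^ k = G * X ^ k * G' := by
        intro k
        induction k with
        | zero => rw [pow_zero, pow_zero, mul_one, hGG']
        | succ k ih =>
          rw [pow_succ, ih, pow_succ, hZdef]
          calc G * X ^ k * G' * (G * X * G') = G * X ^ k * (G' * G * (X * G')) := by
                simp only [mul_assoc]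
            _ = G * X ^ k * (X * G') := by rw [hG'G, one_mul]
            _ = G * (X ^ k * X) * G' := by simp only [mul_assoc]
      -- Z commutes with X
      have hXnil : IsNilpotent X := ⟨n, hXn⟩
      have hU : IsUnit (1 + X) := hXnil.isUnit_one_add
      have hu_mem : hU.unit ∈ matrixCentralizer X := by
        rw [mem_matrixCentralizer_iff, IsUnit.unit_spec, add_mul, mul_add, one_mul, mul_one]
      have hmem := (Subgroup.mem_normalizer_iff.mp hg hU.unit).mp hu_mem
      rw [mem_matrixCentralizer_iff] at hmem
      have hval : (↑(g * hU.unit * g⁻¹) : Matrix (Fin n) (Fin n) K) = 1 + Z := by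
        rw [Units.val_mul, Units.val_mul, IsUnit.unit_spec, ← hGdef, ← hG'def,
          mul_add, add_mul, mul_one, hGG', hZdef]
      rw [hval, add_mul, mul_add, one_mul, mul_one] at hmem
      have hcomm : Z * X = X * Z := by
        have := hmem
        exact add_left_cancel this
      obtain ⟨a, haZ⟩ := mem_span hn0 X Z v hXn hv hcomm
      set c : ℕ → K := fun i => if h : i < n then a ⟨i, h⟩ else 0 with hcdef
      have hZsum : Z = ∑ i ∈ Finset.range n, c i • X ^ i := by
        rw [haZ, ← Fin.sum_univ_eq_sum_range (fun i => c i • X ^ i) n]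
        refine Finset.sum_congr rfl fun i _ => ?_
        simp [hcdef, i.isLt]
      have hsplit : Finset.range n = insert 0 (Finset.Icc 1 (n - 1)) := by
        ext x; simp only [Finset.mem_range, Finset.mem_insert, Finset.mem_Icc]; omega
      have h0not : (0 : ℕ) ∉ Finset.Icc 1 (n - 1) := by simp
      have hZsum2 : Z = c 0 • (1 : Matrix (Fin n) (Fin n) K)
          + ∑ i ∈ Finset.Icc 1 (n - 1), c i • X ^ i := by
        rw [hZsum, hsplit, Finset.sum_insert h0not, pow_zero]
      have hZn : Z ^ n = 0 := by rw [hpow n, hXn, mul_zero, zero_mul]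
      have hTn : (∑ i ∈ Finset.Icc 1 (n - 1), c i • X ^ i) ^ n = 0 :=
        nilp_sum X hXn c (n - 1)
      have hc0 : c 0 = 0 := by
        have hZT : Z - (∑ i ∈ Finset.Icc 1 (n - 1), c i • X ^ i)
            = c 0 • (1 : Matrix (Fin n) (Fin n) K) := by
          rw [hZsum2, add_sub_cancel_right]
        have hcommZT : Commute Z (∑ i ∈ Finset.Icc 1 (n - 1), c i • X ^ i) :=
          comm_sum X Z hcomm _ _ _
        have hnil : IsNilpotent (Z - ∑ i ∈ Finset.Icc 1 (n - 1), c i • X ^ i) :=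
          Commute.isNilpotent_sub hcommZT ⟨n, hZn⟩ ⟨n, hTn⟩
        rw [hZT] at hnil
        obtain ⟨m, hm⟩ := hnil
        rw [smul_pow, one_pow] at hm
        have h10 : (1 : Matrix (Fin n) (Fin n) K) ≠ 0 := by
          intro h
          have := congrFun (congrFun h ⟨0, hn0⟩) ⟨0, hn0⟩
          simp [Matrix.one_apply] at this
        rcases smul_eq_zero.mp hm with h | h
        · exact (pow_eq_zero_iff'.mp h).1
        · exact absurd h h10
      have hZfinal : Z = ∑ i ∈ Finset.Icc 1 (n - 1), c i • X ^ i := by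
        rw [hZsum2, hc0, zero_smul, zero_add]
      have hZpred : Z ^ (n - 1) ≠ 0 := by
        intro h0
        apply hXreg
        have hX' : X ^ (n - 1) = G' * Z ^ (n - 1) * G := by
          rw [hpow]
          calc X ^ (n-1) = G' * G * X ^ (n-1) * (G' * G) := by rw [hG'G, one_mul, mul_one]
            _ = G' * (G * X ^ (n-1) * G') * G := by simp only [mul_assoc]
        rw [hX', h0, mul_zero, zero_mul]
      have hc1 : c 1 ≠ 0 := by
        intro hc1
        apply hZpred
        rw [hZfinal, sum_pow_pred hn2 X hXn c, hc1, zero_pow (by omega), zero_smul]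
      exact ⟨c, hc1, hZfinal⟩
    · -- reverse direction
      rintro ⟨c, hc1, rfl⟩
      set Y := ∑ i ∈ Finset.Icc 1 (n - 1), c i • X ^ i with hYdef
      have hXY : X * Y = Y * X := comm_sum X X rfl _ _ _
      have hYn : Y ^ n = 0 := nilp_sum X hXn c (n - 1)
      have hYpred : Y ^ (n - 1) = c 1 ^ (n - 1) • X ^ (n - 1) := sum_pow_pred hn2 X hXn c
      have hvY : Y ^ (n - 1) *ᵥ v ≠ 0 := by
        rw [hYpred, Matrix.smul_mulVec]
        exact smul_ne_zero (pow_ne_zero _ hc1) hv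
      obtain ⟨g, hgX⟩ := exists_unit_conj hn0 X Y v hXn hv hYn hvY
      set G : Matrix (Fin n) (Fin n) K := ↑g with hGdef
      set G' : Matrix (Fin n) (Fin n) K := ↑g⁻¹ with hG'def
      have hGG' : G * G' = 1 := by
        rw [hGdef, hG'def, ← Units.val_mul, mul_inv_cancel, Units.val_one]
      have hG'G : G' * G = 1 := by
        rw [hGdef, hG'def, ← Units.val_mul, inv_mul_cancel, Units.val_one]
      have hY : Y = G * X * G' := by
        rw [hgX, mul_assoc, hGG', mul_one]
      -- commuting with X iff commuting with Y
      have hiff : ∀ M : Matrix (Fin n) (Fin n) K, (M * X = X * M) ↔ (M * Y = Y * M) := by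
        intro M
        constructor
        · intro h
          exact comm_sum X M h _ _ _
        · intro h
          obtain ⟨b, hb⟩ := mem_span hn0 Y M v hYn hvY h
          rw [hb]
          exact (comm_sum Y X hXY _ _ _).symm
      refine ⟨g, ?_, hY⟩
      rw [Subgroup.mem_normalizer_iff]
      intro h
      rw [mem_matrixCentralizer_iff, mem_matrixCentralizer_iff]
      have hhval : (↑(g * h * g⁻¹) : Matrix (Fin n) (Fin n) K)
          = G * (↑h : Matrix (Fin n) (Fin n) K) * G' := by
        rw [Units.val_mul, Units.val_mul, ← hGdef, ← hG'def]
      rw [hhval]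
      rw [hiff (G * (↑h : Matrix (Fin n) (Fin n) K) * G'), hY]
      constructor
      · intro hh
        rw [conj_mul_conj G G' _ _ hG'G, conj_mul_conj G G' _ _ hG'G]
        rw [conj_cancel G G' _ _ hGG' hG'G]
        exact hh
      · intro hh
        rw [conj_mul_conj G G' _ _ hG'G, conj_mul_conj G G' _ _ hG'G,
          conj_cancel G G' _ _ hGG' hG'G] at hh
        exact hh
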